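/- Let X = [X₀,X₁] and Y = [Y₀,Y₁] be regular pairs of Hilbert spaces, and let T be a linear map defined on X₀ whose restrictions T : X_j → Y_j (j = 0,1) are bounded Fredholm operators with a common kernel and equal index. Then for any interpolation parameter ψ, the bounded operator T : X_ψ → Y_ψ is Fredholm with the same kernel and index, and its range equals Y_ψ ∩ T(X₀). -/

import Mathlib

/-- A bounded operator between normed spaces is Fredholm if its kernel and cokernel
are finite-dimensional. -/
def IsFredholm {E F : Type*} [NormedAddCommGroup E] [NormedAddCommGroup F]
    [NormedSpace ℂ E] [NormedSpace ℂ F] (T : E →L[ℂ] F) : Prop :=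
  FiniteDimensional ℂ (LinearMap.ker (T : E →ₗ[ℂ] F)) ∧ FiniteDimensional ℂ (F ⧸ LinearMap.range (T : E →ₗ[ℂ] F))

/-- The index of an operator: `dim ker T - dim coker T`. -/
noncomputable def fIndex {E F : Type*} [NormedAddCommGroup E] [NormedAddCommGroup F]
    [NormedSpace ℂ E] [NormedSpace ℂ F] (T : E →L[ℂ] F) : ℤ :=
  (Module.finrank ℂ (LinearMap.ker (T : E →ₗ[ℂ] F)) : ℤ) -
    (Module.finrank ℂ (F ⧸ LinearMap.range (T : E →ₗ[ℂ] F)) : ℤ)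

open Submodule

/-- A bounded operator from a Hilbert space with finite-dimensional cokernel has
closed range. -/
theorem auxClosedRange {E F : Type*} [NormedAddCommGroup E] [InnerProductSpace ℂ E]
    [CompleteSpace E] [NormedAddCommGroup F] [NormedSpace ℂ F] [CompleteSpace F]
    (T : E →L[ℂ] F) (h : FiniteDimensional ℂ (F ⧸ LinearMap.range (T : E →ₗ[ℂ] F))) :
    IsClosed ((LinearMap.range (T : E →ₗ[ℂ] F) : Submodule ℂ F) : Set F) := by
  set K : Submodule ℂ E := LinearMap.ker (T : E →ₗ[ℂ] F)
  haveI : CompleteSpace K := (ContinuousLinearMap.isClosed_ker T).completeSpace_coe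
  set W : Submodule ℂ E := Kᗮ
  haveI : CompleteSpace W := (Submodule.isClosed_orthogonal K).completeSpace_coe
  have hKW : IsCompl K W := Submodule.isCompl_orthogonal_of_hasOrthogonalProjection
  set T' : W →L[ℂ] F := T.comp W.subtypeL
  have hrange : LinearMap.range (T' : W →ₗ[ℂ] F) = LinearMap.range (T : E →ₗ[ℂ] F) := by
    apply le_antisymm
    · rintro _ ⟨w, rfl⟩; exact ⟨w, rfl⟩
    · rintro _ ⟨x, rfl⟩
      have hx : x ∈ K ⊔ W := hKW.sup_eq_top ▸ Submodule.mem_top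
      obtain ⟨k, hk, w, hw, rfl⟩ := Submodule.mem_sup.mp hx
      refine ⟨⟨w, hw⟩, ?_⟩
      simp only [T', ContinuousLinearMap.comp_apply, Submodule.subtypeL_apply, map_add]
      rw [LinearMap.mem_ker.mp hk, zero_add]; rfl
  have hker' : LinearMap.ker (T' : W →ₗ[ℂ] F) = ⊥ := by
    rw [LinearMap.ker_eq_bot]
    intro a b hab
    have : ((a : E) - b) ∈ K ⊓ W := by
      refine Submodule.mem_inf.mpr ⟨?_, Submodule.sub_mem W a.2 b.2⟩
      show (a : E) - b ∈ LinearMap.ker (T : E →ₗ[ℂ] F)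
      rw [LinearMap.mem_ker, map_sub, sub_eq_zero]
      exact hab
    rw [hKW.inf_eq_bot] at this
    exact Subtype.ext (sub_eq_zero.mp this)
  obtain ⟨C, hC⟩ := Submodule.exists_isCompl (LinearMap.range (T : E →ₗ[ℂ] F))
  haveI : FiniteDimensional ℂ C :=
    (Submodule.quotientEquivOfIsCompl _ C hC).finiteDimensional
  have hC' : IsCompl (LinearMap.range (T' : W →ₗ[ℂ] F)) C := hrange ▸ hC
  have := T'.closed_complemented_range_of_isCompl_of_ker_eq_bot C hC'
    (Submodule.closed_of_finiteDimensional C) hker'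
  rw [hrange] at this
  exact this

/-- The sup of a closed complemented submodule and a finite-dimensional submodule
is closed. -/
theorem auxClosedSup {E : Type*} [NormedAddCommGroup E] [NormedSpace ℂ E]
    (p q : Submodule ℂ E) (hpc : p.ClosedComplemented) [FiniteDimensional ℂ q] :
    IsClosed ((p ⊔ q : Submodule ℂ E) : Set E) := by
  obtain ⟨π, hπ⟩ := hpc
  set σ : E →L[ℂ] E := ContinuousLinearMap.id ℂ E - p.subtypeL.comp π with hσ
  have hσ_apply : ∀ x, σ x = x - (π x : E) := fun x => rfl
  have hσp : ∀ x ∈ p, σ x = 0 := by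
    intro x hx
    rw [hσ_apply, hπ ⟨x, hx⟩, sub_self]
  have hq' : FiniteDimensional ℂ (Submodule.map (σ : E →ₗ[ℂ] E) q) :=
    Module.Finite.map q (σ : E →ₗ[ℂ] E)
  have hset : ((p ⊔ q : Submodule ℂ E) : Set E)
      = σ ⁻¹' (Submodule.map (σ : E →ₗ[ℂ] E) q : Set E) := by
    ext x
    simp only [SetLike.mem_coe, Set.mem_preimage]
    constructor
    · intro hx
      obtain ⟨a, ha, b, hb, rfl⟩ := Submodule.mem_sup.mp hx
      have : σ (a + b) = σ b := by rw [map_add, hσp a ha, zero_add]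
      rw [this]
      exact ⟨b, hb, rfl⟩
    · rintro ⟨v, hv, hvx⟩
      simp only [ContinuousLinearMap.coe_coe] at hvx
      have hx : x = (π x : E) + σ x := by rw [hσ_apply]; abel
      have h1 : (π x : E) ∈ p ⊔ q := Submodule.mem_sup_left (π x).2
      have h2 : σ x ∈ p ⊔ q := by
        rw [← hvx, hσ_apply]
        exact Submodule.sub_mem _ (Submodule.mem_sup_right hv) (Submodule.mem_sup_left (π v).2)
      rw [hx]; exact Submodule.add_mem _ h1 h2
  rw [hset]
  exact (Submodule.closed_of_finiteDimensional _).preimage σ.continuous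

/-- Generic construction of a continuous linear solution operator for a surjectivized
Fredholm-type problem. -/
theorem auxSolution {X Y M : Type*}
    [NormedAddCommGroup X] [NormedSpace ℂ X] [CompleteSpace X]
    [NormedAddCommGroup Y] [NormedSpace ℂ Y] [CompleteSpace Y]
    [NormedAddCommGroup M] [NormedSpace ℂ M] [CompleteSpace M]
    (T : X →L[ℂ] Y) (J : M →L[ℂ] Y) (P : X →L[ℂ] X)
    (hPker : ∀ x, T (P x) = 0) (hPid : ∀ x, T x = 0 → P x = x)
    (hdisj : ∀ m : M, J m ∈ LinearMap.range (T : X →ₗ[ℂ] Y) → m = 0)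
    (hsurj : ∀ y : Y, ∃ x m, T x + J m = y) :
    ∃ (S : Y →L[ℂ] X) (ρ : Y →L[ℂ] M), ∀ y, T (S y) + J (ρ y) = y ∧ P (S y) = 0 := by
  have hPP : ∀ x, P (P x) = P x := fun x => hPid (P x) (hPker x)
  set K : Submodule ℂ (X × M) :=
    LinearMap.ker ((P.comp (ContinuousLinearMap.fst ℂ X M)) : X × M →ₗ[ℂ] X) with hK
  haveI : CompleteSpace K := (ContinuousLinearMap.isClosed_ker _).completeSpace_coe
  set Φ : K →L[ℂ] Y := (T.coprod J).comp K.subtypeL with hΦ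
  have hΦapp : ∀ z : K, Φ z = T (z : X × M).1 + J (z : X × M).2 := fun z => rfl
  have hKmem : ∀ z : K, P (z : X × M).1 = 0 := fun z => z.2
  have hinj : LinearMap.ker (Φ : K →ₗ[ℂ] Y) = ⊥ := by
    rw [LinearMap.ker_eq_bot]
    intro a b hab
    have hz : Φ (a - b) = 0 := by rw [map_sub, show Φ a = Φ b from hab, sub_self]
    rw [hΦapp] at hz
    have h1 : T ((a - b : K) : X × M).1 = -(J ((a - b : K) : X × M).2) :=
      eq_neg_of_add_eq_zero_left hz
    have hm0 : ((a - b : K) : X × M).2 = 0 := by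
      apply hdisj
      exact ⟨-((a - b : K) : X × M).1, by rw [map_neg, ContinuousLinearMap.coe_coe, h1, neg_neg]⟩
    have hT0 : T ((a - b : K) : X × M).1 = 0 := by rw [h1, hm0, map_zero, neg_zero]
    have hx0 : ((a - b : K) : X × M).1 = 0 := by
      rw [← hPid _ hT0]; exact hKmem (a - b)
    have hc0 : (a - b : K) = 0 := Subtype.ext (Prod.ext hx0 hm0)
    exact sub_eq_zero.mp hc0
  have hsurjΦ : LinearMap.range (Φ : K →ₗ[ℂ] Y) = ⊤ := by
    rw [LinearMap.range_eq_top]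
    intro y
    obtain ⟨x, m, hxm⟩ := hsurj y
    have hmemK : ((x - P x, m) : X × M) ∈ K := by
      show P (x - P x) = 0
      rw [map_sub, hPP, sub_self]
    refine ⟨⟨_, hmemK⟩, ?_⟩
    show T (x - P x) + J m = y
    rw [map_sub, hPker, sub_zero, hxm]
  set Ψ := ContinuousLinearEquiv.ofBijective Φ hinj hsurjΦ with hΨ
  set Sg : Y →L[ℂ] K := Ψ.symm.toContinuousLinearMap with hSg
  have hSgapp : ∀ y, Φ (Sg y) = y := fun y =>
    ContinuousLinearEquiv.ofBijective_apply_symm_apply Φ hinj hsurjΦ y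
  refine ⟨(ContinuousLinearMap.fst ℂ X M).comp (K.subtypeL.comp Sg),
    (ContinuousLinearMap.snd ℂ X M).comp (K.subtypeL.comp Sg), fun y => ?_⟩
  constructor
  · have := hSgapp y
    rw [hΦapp] at this
    exact this
  · exact hKmem (Sg y)

set_option maxHeartbeats 3200000

/-- Interpolation of Fredholm operators.  Here `[X₀, X₁]` and `[Y₀, Y₁]` are regular
pairs of Hilbert spaces (`X₁ ↪ X₀` continuously and densely, via `kX ∘ jX`), and
`Xm = X_ψ`, `Ym = Y_ψ` are the interpolation spaces with an interpolation parameter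
`ψ`, encoded through the dense continuous inclusions `X₁ ↪ X_ψ ↪ X₀` (maps `jX`, `kX`)
and through the interpolation property: every linear map bounded on both endpoint
couples (in any of the four directions) is bounded on the ψ-spaces.  If `T` restricts
to bounded Fredholm operators `T : X₀ → Y₀` and `T : X₁ → Y₁` with common kernel and
equal index, then the interpolated operator `T : X_ψ → Y_ψ` is Fredholm with the same
kernel and index, and its range is `Y_ψ ∩ T(X₀)`. -/
theorem stmt17
    {X0 X1 Xm Y0 Y1 Ym : Type*}
    [NormedAddCommGroup X0] [InnerProductSpace ℂ X0] [CompleteSpace X0]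
    [NormedAddCommGroup X1] [InnerProductSpace ℂ X1] [CompleteSpace X1]
    [NormedAddCommGroup Xm] [InnerProductSpace ℂ Xm] [CompleteSpace Xm]
    [NormedAddCommGroup Y0] [InnerProductSpace ℂ Y0] [CompleteSpace Y0]
    [NormedAddCommGroup Y1] [InnerProductSpace ℂ Y1] [CompleteSpace Y1]
    [NormedAddCommGroup Ym] [InnerProductSpace ℂ Ym] [CompleteSpace Ym]
    (jX : X1 →L[ℂ] Xm) (kX : Xm →L[ℂ] X0)
    (jY : Y1 →L[ℂ] Ym) (kY : Ym →L[ℂ] Y0)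
    (hjX : Function.Injective jX) (hkX : Function.Injective kX)
    (hjY : Function.Injective jY) (hkY : Function.Injective kY)
    (hdjX : DenseRange jX) (hdkX : DenseRange kX)
    (hdjY : DenseRange jY) (hdkY : DenseRange kY)
    (hinterpXY : ∀ (S0 : X0 →L[ℂ] Y0) (S1 : X1 →L[ℂ] Y1),
      (∀ x, S0 (kX (jX x)) = kY (jY (S1 x))) →
      ∃ Sm : Xm →L[ℂ] Ym, ∀ x, S0 (kX x) = kY (Sm x))
    (hinterpYX : ∀ (S0 : Y0 →L[ℂ] X0) (S1 : Y1 →L[ℂ] X1),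
      (∀ y, S0 (kY (jY y)) = kX (jX (S1 y))) →
      ∃ Sm : Ym →L[ℂ] Xm, ∀ y, S0 (kY y) = kX (Sm y))
    (hinterpXX : ∀ (S0 : X0 →L[ℂ] X0) (S1 : X1 →L[ℂ] X1),
      (∀ x, S0 (kX (jX x)) = kX (jX (S1 x))) →
      ∃ Sm : Xm →L[ℂ] Xm, ∀ x, S0 (kX x) = kX (Sm x))
    (hinterpYY : ∀ (S0 : Y0 →L[ℂ] Y0) (S1 : Y1 →L[ℂ] Y1),
      (∀ y, S0 (kY (jY y)) = kY (jY (S1 y))) →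
      ∃ Sm : Ym →L[ℂ] Ym, ∀ y, S0 (kY y) = kY (Sm y))
    (T0 : X0 →L[ℂ] Y0) (T1 : X1 →L[ℂ] Y1) (Tm : Xm →L[ℂ] Ym)
    (hT1 : ∀ x, T0 (kX (jX x)) = kY (jY (T1 x)))
    (hTm : ∀ x, T0 (kX x) = kY (Tm x))
    (hF0 : IsFredholm T0) (hF1 : IsFredholm T1)
    (hker : Submodule.map ((kX.comp jX) : X1 →ₗ[ℂ] X0) (LinearMap.ker (T1 : X1 →ₗ[ℂ] Y1)) =
      LinearMap.ker (T0 : X0 →ₗ[ℂ] Y0))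
    (hind : fIndex T1 = fIndex T0) :
    IsFredholm Tm ∧
      Submodule.map (jX : X1 →ₗ[ℂ] Xm) (LinearMap.ker (T1 : X1 →ₗ[ℂ] Y1)) = LinearMap.ker (Tm : Xm →ₗ[ℂ] Ym) ∧
      fIndex Tm = fIndex T0 ∧
      kY '' Set.range Tm = Set.range kY ∩ Set.range T0 := by
  classical
  obtain ⟨ιX, hιXapp, hιXlin⟩ :
      ∃ f : X1 →L[ℂ] X0, (∀ x, f x = kX (jX x)) ∧
        (f : X1 →ₗ[ℂ] X0) = ((kX.comp jX : X1 →L[ℂ] X0) : X1 →ₗ[ℂ] X0) :=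
    ⟨kX.comp jX, fun _ => rfl, rfl⟩
  obtain ⟨ιY, hιYapp, hιYlin⟩ :
      ∃ f : Y1 →L[ℂ] Y0, (∀ y, f y = kY (jY y)) ∧
        (f : Y1 →ₗ[ℂ] Y0) = ((kY.comp jY : Y1 →L[ℂ] Y0) : Y1 →ₗ[ℂ] Y0) :=
    ⟨kY.comp jY, fun _ => rfl, rfl⟩
  have hιX : Function.Injective ιX := by
    intro a b h; rw [hιXapp, hιXapp] at h; exact hjX (hkX h)
  have hιY : Function.Injective ιY := by
    intro a b h; rw [hιYapp, hιYapp] at h; exact hjY (hkY h)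
  have hkerι : Submodule.map (ιX : X1 →ₗ[ℂ] X0) (LinearMap.ker (T1 : X1 →ₗ[ℂ] Y1)) = LinearMap.ker (T0 : X0 →ₗ[ℂ] Y0) := by
    rw [hιXlin]; exact hker
  have hT1ι : ∀ x, T0 (ιX x) = ιY (T1 x) := by
    intro x; rw [hιXapp, hιYapp]; exact hT1 x
  haveI hN0fd : FiniteDimensional ℂ (LinearMap.ker (T0 : X0 →ₗ[ℂ] Y0)) := hF0.1
  haveI hNfd : FiniteDimensional ℂ (LinearMap.ker (T1 : X1 →ₗ[ℂ] Y1)) := hF1.1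
  haveI hQ0fd : FiniteDimensional ℂ (Y0 ⧸ LinearMap.range (T0 : X0 →ₗ[ℂ] Y0)) := hF0.2
  haveI hQ1fd : FiniteDimensional ℂ (Y1 ⧸ LinearMap.range (T1 : X1 →ₗ[ℂ] Y1)) := hF1.2
  -- P0 : continuous projection of X0 onto ker T0
  obtain ⟨P0, hP0mem, hP0id⟩ :
      ∃ P0 : X0 →L[ℂ] X0, (∀ x, P0 x ∈ LinearMap.ker (T0 : X0 →ₗ[ℂ] Y0)) ∧
        (∀ x ∈ LinearMap.ker (T0 : X0 →ₗ[ℂ] Y0), P0 x = x) := by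
    refine ⟨(LinearMap.ker (T0 : X0 →ₗ[ℂ] Y0)).subtypeL.comp (orthogonalProjection (LinearMap.ker (T0 : X0 →ₗ[ℂ] Y0))),
      fun x => ((orthogonalProjection (LinearMap.ker (T0 : X0 →ₗ[ℂ] Y0))) x).2, fun x hx => ?_⟩
    exact Submodule.starProjection_eq_self_iff.mpr hx
  -- P1 : compatible continuous projection of X1 onto ker T1
  have heN : ∀ x : X1, x ∈ LinearMap.ker (T1 : X1 →ₗ[ℂ] Y1) → ιX x ∈ LinearMap.ker (T0 : X0 →ₗ[ℂ] Y0) := by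
    intro x hx; rw [← hkerι]; exact ⟨x, hx, rfl⟩
  obtain ⟨P1, hP1comm, hP1mem, hP1id⟩ :
      ∃ P1 : X1 →L[ℂ] X1, (∀ x, ιX (P1 x) = P0 (ιX x)) ∧ (∀ x, P1 x ∈ LinearMap.ker (T1 : X1 →ₗ[ℂ] Y1)) ∧
        (∀ x ∈ LinearMap.ker (T1 : X1 →ₗ[ℂ] Y1), P1 x = x) := by
    set e : (LinearMap.ker (T1 : X1 →ₗ[ℂ] Y1)) ≃ₗ[ℂ] (LinearMap.ker (T0 : X0 →ₗ[ℂ] Y0)) :=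
      (Submodule.equivMapOfInjective (ιX : X1 →ₗ[ℂ] X0) hιX _).trans
        (LinearEquiv.ofEq _ _ hkerι) with he
    have hecoe : ∀ n : LinearMap.ker (T1 : X1 →ₗ[ℂ] Y1), ((e n : X0)) = ιX n := fun n => rfl
    have hesymm : ∀ v : LinearMap.ker (T0 : X0 →ₗ[ℂ] Y0), ιX ↑(e.symm v) = ↑v := by
      intro v; rw [← hecoe (e.symm v), e.apply_symm_apply]
    have hmem0 : ∀ x : X1, (P0.comp ιX) x ∈ LinearMap.ker (T0 : X0 →ₗ[ℂ] Y0) := fun x => hP0mem _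
    set c1 : X1 →L[ℂ] (LinearMap.ker (T0 : X0 →ₗ[ℂ] Y0)) := (P0.comp ιX).codRestrict _ hmem0 with hc1
    set c2 : (LinearMap.ker (T0 : X0 →ₗ[ℂ] Y0)) →L[ℂ] (LinearMap.ker (T1 : X1 →ₗ[ℂ] Y1)) :=
      LinearMap.toContinuousLinearMap e.symm.toLinearMap with hc2
    have hc2app : ∀ v, c2 v = e.symm v := fun v => rfl
    have hc1app : ∀ x, (c1 x : X0) = P0 (ιX x) := fun x => rfl
    refine ⟨(LinearMap.ker (T1 : X1 →ₗ[ℂ] Y1)).subtypeL.comp (c2.comp c1), ?_, ?_, ?_⟩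
    · intro x
      show ιX ↑(c2 (c1 x)) = P0 (ιX x)
      rw [hc2app, hesymm, hc1app]
    · intro x; exact (c2 (c1 x)).2
    · intro x hx
      have h1 : c1 x = e ⟨x, hx⟩ := by
        apply Subtype.ext
        rw [hc1app, hecoe]
        exact hP0id _ (heN x hx)
      show ↑(c2 (c1 x)) = x
      rw [hc2app, h1, e.symm_apply_apply]
  -- complement M of range T1 in Y1
  obtain ⟨M, hM⟩ := Submodule.exists_isCompl (LinearMap.range (T1 : X1 →ₗ[ℂ] Y1))
  haveI hMfd : FiniteDimensional ℂ M :=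
    (Submodule.quotientEquivOfIsCompl _ M hM).finiteDimensional
  -- range T0 closed and complemented
  have hR0closed : IsClosed ((LinearMap.range (T0 : X0 →ₗ[ℂ] Y0) : Submodule ℂ Y0) : Set Y0) :=
    auxClosedRange T0 hF0.2
  have hR0cc : (LinearMap.range (T0 : X0 →ₗ[ℂ] Y0)).ClosedComplemented :=
    Submodule.ClosedComplemented.of_quotient_finiteDimensional hR0closed
  have hιYT1 : ∀ x, ιY (T1 x) ∈ LinearMap.range (T0 : X0 →ₗ[ℂ] Y0) := fun x => ⟨ιX x, hT1ι x⟩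
  -- density : range ιY ⊔ range T0 = ⊤
  have hdιY : DenseRange ιY := by
    have h := hdkY.comp hdjY kY.continuous
    have hco : ⇑ιY = ⇑kY ∘ ⇑jY := by funext y; exact hιYapp y
    rw [DenseRange, hco]
    exact h
  have hVtop : LinearMap.range (ιY : Y1 →ₗ[ℂ] Y0) ⊔ LinearMap.range (T0 : X0 →ₗ[ℂ] Y0) = ⊤ := by
    obtain ⟨C, hC⟩ := Submodule.exists_isCompl (LinearMap.range (T0 : X0 →ₗ[ℂ] Y0))
    haveI : FiniteDimensional ℂ C := (Submodule.quotientEquivOfIsCompl _ C hC).finiteDimensional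
    set V := LinearMap.range (ιY : Y1 →ₗ[ℂ] Y0) ⊔ LinearMap.range (T0 : X0 →ₗ[ℂ] Y0) with hV
    have hle : LinearMap.range (T0 : X0 →ₗ[ℂ] Y0) ≤ V := le_sup_right
    have hmod : LinearMap.range (T0 : X0 →ₗ[ℂ] Y0) ⊔ (C ⊓ V) = V := by
      rw [← sup_inf_assoc_of_le _ hle, hC.sup_eq_top, top_inf_eq]
    haveI : FiniteDimensional ℂ (C ⊓ V : Submodule ℂ Y0) :=
      Submodule.finiteDimensional_of_le inf_le_left
    have hclosed : IsClosed (V : Set Y0) := by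
      rw [← hmod]; exact auxClosedSup _ _ hR0cc
    have huniv : (V : Set Y0) = Set.univ := by
      apply Set.eq_univ_of_univ_subset
      rw [← hdιY.closure_range]
      refine closure_minimal ?_ hclosed
      rintro _ ⟨y, rfl⟩
      exact SetLike.mem_coe.mpr (Submodule.mem_sup_left (LinearMap.mem_range_self (ιY : Y1 →ₗ[ℂ] Y0) y))
    rw [Submodule.eq_top_iff']
    intro x
    exact Set.eq_univ_iff_forall.mp huniv x
  -- dimension bookkeeping
  have hfrk_ker : Module.finrank ℂ (LinearMap.ker (T1 : X1 →ₗ[ℂ] Y1)) = Module.finrank ℂ (LinearMap.ker (T0 : X0 →ₗ[ℂ] Y0)) := by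
    rw [← hkerι]
    exact (Submodule.equivMapOfInjective (ιX : X1 →ₗ[ℂ] X0) hιX _).finrank_eq
  have hfrk_cok : Module.finrank ℂ (Y1 ⧸ LinearMap.range (T1 : X1 →ₗ[ℂ] Y1))
      = Module.finrank ℂ (Y0 ⧸ LinearMap.range (T0 : X0 →ₗ[ℂ] Y0)) := by
    have h1 := hind
    unfold fIndex at h1
    rw [hfrk_ker] at h1
    omega
  -- the key regularity fact : ιY y ∈ range T0 → y ∈ range T1
  have hkey : ∀ y : Y1, ιY y ∈ LinearMap.range (T0 : X0 →ₗ[ℂ] Y0) → y ∈ LinearMap.range (T1 : X1 →ₗ[ℂ] Y1) := by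
    set ψ : Y1 →ₗ[ℂ] Y0 ⧸ LinearMap.range (T0 : X0 →ₗ[ℂ] Y0) :=
      (LinearMap.range (T0 : X0 →ₗ[ℂ] Y0)).mkQ.comp (ιY : Y1 →ₗ[ℂ] Y0) with hψ
    have hψapp : ∀ y, ψ y = Submodule.Quotient.mk (ιY y) := fun y => rfl
    have hψker : ∀ y, ψ y = 0 ↔ ιY y ∈ LinearMap.range (T0 : X0 →ₗ[ℂ] Y0) := by
      intro y; rw [hψapp, Submodule.Quotient.mk_eq_zero]
    have hle : LinearMap.range (T1 : X1 →ₗ[ℂ] Y1) ≤ LinearMap.ker ψ := by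
      rintro _ ⟨x, rfl⟩
      rw [LinearMap.mem_ker, hψker]
      exact hιYT1 x
    set φ := (LinearMap.range (T1 : X1 →ₗ[ℂ] Y1)).liftQ ψ hle with hφ
    have hφsurj : Function.Surjective φ := by
      rw [← LinearMap.range_eq_top, Submodule.range_liftQ, LinearMap.range_eq_top]
      intro z
      obtain ⟨y0, rfl⟩ := Submodule.mkQ_surjective _ z
      have hy0 : y0 ∈ LinearMap.range (ιY : Y1 →ₗ[ℂ] Y0) ⊔ LinearMap.range (T0 : X0 →ₗ[ℂ] Y0) := hVtop ▸ Submodule.mem_top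
      obtain ⟨a, ⟨y, rfl⟩, b, hb, rfl⟩ := Submodule.mem_sup.mp hy0
      refine ⟨y, ?_⟩
      rw [hψapp]
      show Submodule.Quotient.mk (ιY y) = Submodule.Quotient.mk (ιY y + b)
      exact (Submodule.Quotient.eq _).mpr (by simpa using Submodule.neg_mem _ hb)
    have hφinj : Function.Injective φ :=
      (LinearMap.injective_iff_surjective_of_finrank_eq_finrank hfrk_cok).mpr hφsurj
    intro y hy
    have h0 : φ (Submodule.Quotient.mk y) = φ 0 := by
      rw [map_zero]
      show ψ y = 0
      rw [hψker]; exact hy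
    have h1 := hφinj h0
    exact (Submodule.Quotient.mk_eq_zero _).mp h1
  -- range T0 ⊔ ιY M = ⊤
  have hsupM : LinearMap.range (T0 : X0 →ₗ[ℂ] Y0) ⊔ Submodule.map (ιY : Y1 →ₗ[ℂ] Y0) M = ⊤ := by
    rw [← top_le_iff, ← hVtop]
    apply sup_le _ le_sup_left
    rintro _ ⟨y, rfl⟩
    have hy : y ∈ LinearMap.range (T1 : X1 →ₗ[ℂ] Y1) ⊔ M := hM.sup_eq_top ▸ Submodule.mem_top
    obtain ⟨a, ⟨x, rfl⟩, m, hm, rfl⟩ := Submodule.mem_sup.mp hy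
    rw [map_add]
    exact Submodule.add_mem_sup (hιYT1 x) ⟨m, hm, rfl⟩
  -- solution operator on the Y1 level
  obtain ⟨S1, ρ1, hS1⟩ := auxSolution T1 M.subtypeL P1
    (fun x => LinearMap.mem_ker.mp (hP1mem x))
    (fun x hx => hP1id x (LinearMap.mem_ker.mpr hx))
    (fun m hm => Subtype.ext ((Submodule.disjoint_def.mp hM.disjoint) _ hm m.2))
    (fun y => by
      have hy : y ∈ LinearMap.range (T1 : X1 →ₗ[ℂ] Y1) ⊔ M := hM.sup_eq_top ▸ Submodule.mem_top
      obtain ⟨a, ⟨x, rfl⟩, m, hm, rfl⟩ := Submodule.mem_sup.mp hy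
      exact ⟨x, ⟨m, hm⟩, rfl⟩)
  -- solution operator on the Y0 level
  obtain ⟨S0, ρ0, hS0⟩ := auxSolution T0 (ιY.comp M.subtypeL) P0
    (fun x => LinearMap.mem_ker.mp (hP0mem x))
    (fun x hx => hP0id x (LinearMap.mem_ker.mpr hx))
    (fun m hm => by
      have hm1 : ιY (m : Y1) ∈ LinearMap.range (T0 : X0 →ₗ[ℂ] Y0) := by
        simpa only [ContinuousLinearMap.comp_apply, Submodule.subtypeL_apply] using hm
      have h2 : (m : Y1) ∈ LinearMap.range (T1 : X1 →ₗ[ℂ] Y1) := hkey _ hm1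
      exact Subtype.ext ((Submodule.disjoint_def.mp hM.disjoint) _ h2 m.2))
    (fun y => by
      have hy : y ∈ LinearMap.range (T0 : X0 →ₗ[ℂ] Y0) ⊔ Submodule.map (ιY : Y1 →ₗ[ℂ] Y0) M :=
        hsupM ▸ Submodule.mem_top
      obtain ⟨a, ⟨x, rfl⟩, b, ⟨m, hm, rfl⟩, rfl⟩ := Submodule.mem_sup.mp hy
      refine ⟨x, ⟨m, hm⟩, ?_⟩
      simp only [ContinuousLinearMap.comp_apply, Submodule.subtypeL_apply,
        ContinuousLinearMap.coe_coe])
  have hS0app : ∀ y, T0 (S0 y) + ιY (ρ0 y : Y1) = y := fun y => by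
    have h := (hS0 y).1
    simpa only [ContinuousLinearMap.comp_apply, Submodule.subtypeL_apply] using h
  have hS1app : ∀ y, T1 (S1 y) + (ρ1 y : Y1) = y := fun y => by
    have h := (hS1 y).1
    simpa only [Submodule.subtypeL_apply] using h
  -- ρ0 vanishes on range T0
  have hvanish : ∀ y0 ∈ LinearMap.range (T0 : X0 →ₗ[ℂ] Y0), ρ0 y0 = 0 := by
    rintro _ ⟨x, rfl⟩
    have h1 : ιY (ρ0 (T0 x) : Y1) = T0 (x - S0 (T0 x)) := by
      rw [map_sub, eq_sub_iff_add_eq, add_comm]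
      exact hS0app (T0 x)
    have h2 : (ρ0 (T0 x) : Y1) ∈ LinearMap.range (T1 : X1 →ₗ[ℂ] Y1) :=
      hkey _ ⟨x - S0 (T0 x), h1.symm⟩
    have h3 : (ρ0 (T0 x) : Y1) = 0 :=
      (Submodule.disjoint_def.mp hM.disjoint) _ h2 (ρ0 (T0 x)).2
    exact Subtype.ext h3
  -- compatibility of the two solution operators
  have hcompat : ∀ y : Y1, S0 (ιY y) = ιX (S1 y) ∧ ρ0 (ιY y) = ρ1 y := by
    intro y
    have hid0 := hS0app (ιY y)
    have hid1 : T0 (ιX (S1 y)) + ιY (ρ1 y : Y1) = ιY y := by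
      rw [hT1ι, ← map_add]
      exact congrArg ιY (hS1app y)
    have hd : T0 (S0 (ιY y) - ιX (S1 y)) = ιY ((ρ1 y : Y1) - (ρ0 (ιY y) : Y1)) := by
      have h := hid0.trans hid1.symm
      rw [map_sub, map_sub]
      rw [sub_eq_sub_iff_add_eq_add, add_comm (ιY (ρ1 y : Y1))]
      exact h
    have hdr : ((ρ1 y : Y1) - (ρ0 (ιY y) : Y1)) ∈ LinearMap.range (T1 : X1 →ₗ[ℂ] Y1) :=
      hkey _ ⟨_, hd⟩
    have hdm : ((ρ1 y : Y1) - (ρ0 (ιY y) : Y1)) ∈ M :=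
      Submodule.sub_mem M (ρ1 y).2 (ρ0 (ιY y)).2
    have hρ : (ρ0 (ιY y) : Y1) = (ρ1 y : Y1) := by
      have h0 := (Submodule.disjoint_def.mp hM.disjoint) _ hdr hdm
      rw [sub_eq_zero] at h0
      exact h0.symm
    have hT0d : T0 (S0 (ιY y) - ιX (S1 y)) = 0 := by
      rw [hd, hρ, sub_self, map_zero]
    have hNd : S0 (ιY y) - ιX (S1 y) ∈ LinearMap.ker (T0 : X0 →ₗ[ℂ] Y0) := LinearMap.mem_ker.mpr hT0d
    have hP0d : P0 (S0 (ιY y) - ιX (S1 y)) = 0 := by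
      rw [map_sub, (hS0 (ιY y)).2, ← hP1comm, (hS1 y).2, map_zero, zero_sub, neg_zero]
    have hz : S0 (ιY y) - ιX (S1 y) = 0 := by
      rw [← hP0id _ hNd]
      exact hP0d
    exact ⟨sub_eq_zero.mp hz, Subtype.ext hρ⟩
  -- interpolate S and ρ
  obtain ⟨Sm, hSm⟩ := hinterpYX S0 S1 (fun y => by
    rw [← hιYapp y, ← hιXapp (S1 y)]
    exact (hcompat y).1)
  obtain ⟨Am, hAm⟩ := hinterpYY ((ιY.comp M.subtypeL).comp ρ0) (M.subtypeL.comp ρ1)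
    (fun y => by
      simp only [ContinuousLinearMap.comp_apply, Submodule.subtypeL_apply]
      rw [← hιYapp y, (hcompat y).2, hιYapp])
  have hAm' : ∀ y, ιY (ρ0 (kY y) : Y1) = kY (Am y) := fun y => by
    have h := hAm y
    simpa only [ContinuousLinearMap.comp_apply, Submodule.subtypeL_apply] using h
  -- the fundamental identity on Ym
  have hMain : ∀ y : Ym, Tm (Sm y) + Am y = y := by
    intro y
    apply hkY
    rw [map_add, ← hTm (Sm y), ← hSm y, ← hAm' y]
    exact hS0app (kY y)
  have hAmem : ∀ y, Am y ∈ Submodule.map (jY : Y1 →ₗ[ℂ] Ym) M := by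
    intro y
    have h1 : kY (Am y) = kY (jY (ρ0 (kY y) : Y1)) := by
      rw [← hAm' y, hιYapp]
    exact ⟨_, (ρ0 (kY y)).2, (hkY h1).symm⟩
  have hA0 : ∀ y, kY y ∈ LinearMap.range (T0 : X0 →ₗ[ℂ] Y0) → Am y = 0 := by
    intro y hy
    apply hkY
    rw [← hAm' y, hvanish _ hy]
    simp
  -- kernel of Tm
  have hkerTm : Submodule.map (jX : X1 →ₗ[ℂ] Xm) (LinearMap.ker (T1 : X1 →ₗ[ℂ] Y1)) = LinearMap.ker (Tm : Xm →ₗ[ℂ] Ym) := by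
    apply le_antisymm
    · rintro _ ⟨n, hn, rfl⟩
      rw [LinearMap.mem_ker]
      apply hkY
      show kY (Tm (jX n)) = kY 0
      rw [← hTm (jX n), hT1 n, show T1 n = 0 from LinearMap.mem_ker.mp hn]
      simp
    · intro x hx
      have h1 : kX x ∈ LinearMap.ker (T0 : X0 →ₗ[ℂ] Y0) := by
        rw [LinearMap.mem_ker, ContinuousLinearMap.coe_coe, hTm x, show Tm x = 0 from LinearMap.mem_ker.mp hx, map_zero]
      rw [← hkerι] at h1
      obtain ⟨n, hn, hnx⟩ := h1
      have hnx' : kX (jX n) = kX x := by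
        rw [← hιXapp n]
        exact hnx
      exact ⟨n, hn, hkX hnx'⟩
  -- complement of range Tm
  have hdisjm : Disjoint (LinearMap.range (Tm : Xm →ₗ[ℂ] Ym)) (Submodule.map (jY : Y1 →ₗ[ℂ] Ym) M) := by
    rw [Submodule.disjoint_def]
    rintro z ⟨x, rfl⟩ ⟨m, hm, hmz⟩
    have hmz' : jY m = Tm x := hmz
    have h1 : ιY m ∈ LinearMap.range (T0 : X0 →ₗ[ℂ] Y0) := by
      refine ⟨kX x, ?_⟩
      rw [ContinuousLinearMap.coe_coe, hTm x, hιYapp, ← hmz']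
    have h2 : m ∈ LinearMap.range (T1 : X1 →ₗ[ℂ] Y1) := hkey m h1
    have h3 : m = 0 := (Submodule.disjoint_def.mp hM.disjoint) m h2 hm
    rw [← hmz, h3, map_zero]
  have hsupm : LinearMap.range (Tm : Xm →ₗ[ℂ] Ym) ⊔ Submodule.map (jY : Y1 →ₗ[ℂ] Ym) M = ⊤ := by
    rw [Submodule.eq_top_iff']
    intro y
    rw [← hMain y]
    exact Submodule.add_mem_sup (LinearMap.mem_range_self (Tm : Xm →ₗ[ℂ] Ym) (Sm y)) (hAmem y)
  have hcomplm : IsCompl (LinearMap.range (Tm : Xm →ₗ[ℂ] Ym)) (Submodule.map (jY : Y1 →ₗ[ℂ] Ym) M) :=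
    ⟨hdisjm, codisjoint_iff.mpr hsupm⟩
  haveI hMMfd : FiniteDimensional ℂ (Submodule.map (jY : Y1 →ₗ[ℂ] Ym) M) :=
    Module.Finite.map M (jY : Y1 →ₗ[ℂ] Ym)
  haveI hcokm : FiniteDimensional ℂ (Ym ⧸ LinearMap.range (Tm : Xm →ₗ[ℂ] Ym)) :=
    (Submodule.quotientEquivOfIsCompl _ _ hcomplm).symm.finiteDimensional
  haveI hkerm : FiniteDimensional ℂ (LinearMap.ker (Tm : Xm →ₗ[ℂ] Ym)) := by
    rw [← hkerTm]
    exact Module.Finite.map _ _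
  refine ⟨⟨hkerm, hcokm⟩, hkerTm, ?_, ?_⟩
  · -- index
    have e1 : Module.finrank ℂ (LinearMap.ker (Tm : Xm →ₗ[ℂ] Ym)) = Module.finrank ℂ (LinearMap.ker (T1 : X1 →ₗ[ℂ] Y1)) := by
      rw [← hkerTm]
      exact ((Submodule.equivMapOfInjective (jX : X1 →ₗ[ℂ] Xm) hjX _).finrank_eq).symm
    have e2 : Module.finrank ℂ (Ym ⧸ LinearMap.range (Tm : Xm →ₗ[ℂ] Ym))
        = Module.finrank ℂ (Y1 ⧸ LinearMap.range (T1 : X1 →ₗ[ℂ] Y1)) := by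
      rw [(Submodule.quotientEquivOfIsCompl _ _ hcomplm).finrank_eq,
        (Submodule.quotientEquivOfIsCompl _ M hM).finrank_eq]
      exact ((Submodule.equivMapOfInjective (jY : Y1 →ₗ[ℂ] Ym) hjY M).finrank_eq).symm
    rw [← hind]
    unfold fIndex
    rw [e1, e2]
  · -- range description
    ext y0
    constructor
    · rintro ⟨z, ⟨x, rfl⟩, rfl⟩
      exact ⟨⟨Tm x, rfl⟩, ⟨kX x, hTm x⟩⟩
    · rintro ⟨⟨ym, rfl⟩, ⟨x0, hx0⟩⟩
      have h1 : kY ym ∈ LinearMap.range (T0 : X0 →ₗ[ℂ] Y0) := ⟨x0, hx0⟩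
      have h2 : Am ym = 0 := hA0 ym h1
      have h3 : Tm (Sm ym) = ym := by
        have h4 := hMain ym
        rw [h2, add_zero] at h4
        exact h4
      exact ⟨ym, ⟨Sm ym, h3⟩, rfl⟩
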